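/- Let p, q, r be positive integers with gcd(p, q, r) = 1. Set g₁ = gcd(p,q), g₂ = gcd(p,r), and m = p/(g₁·g₂) (note g₁·g₂ divides p). Let s be an integer with (r/g₂)·s ≡ 1 (mod p/g₂), and set n = −(q/g₁)·s. Then for all nonzero complex numbers x₁, y₁, x₂, y₂, the three equalities x₁^{q/g₁}·y₁^{r/g₂} = x₂^{q/g₁}·y₂^{r/g₂}, x₁^{p/g₁} = x₂^{p/g₁}, and y₁^{p/g₂} = y₂^{p/g₂} all hold if and only if there exists an integer k such that x₂ = exp(2πi·k/m)·x₁ and y₂ = exp(2πi·k·n/m)·y₁. -/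

import Mathlib

open Complex

private lemma exp_eq_exp_iff_dvd (N : ℕ) (hN : N ≠ 0) (a b : ℤ) :
    Complex.exp (2 * (Real.pi : ℂ) * Complex.I * a / N)
      = Complex.exp (2 * (Real.pi : ℂ) * Complex.I * b / N) ↔ (N : ℤ) ∣ a - b := by
  rw [Complex.exp_eq_exp_iff_exists_int]
  have hN' : (N : ℂ) ≠ 0 := Nat.cast_ne_zero.mpr hN
  have hpi : (2 * (Real.pi : ℂ) * Complex.I) ≠ 0 := by
    simp [Complex.ofReal_ne_zero, Real.pi_ne_zero, Complex.I_ne_zero]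
  constructor
  · rintro ⟨n, hn⟩
    refine ⟨n, ?_⟩
    field_simp at hn
    have h2 : (2 * (Real.pi : ℂ) * Complex.I) * (a : ℂ)
        = (2 * (Real.pi : ℂ) * Complex.I) * ((b : ℂ) + n * N) := by
      linear_combination (2 * (Real.pi : ℂ) * Complex.I) * hn
    have h3 : (a : ℂ) = (b : ℂ) + n * N := mul_left_cancel₀ hpi h2
    have h4 : a = b + n * N := by exact_mod_cast h3
    linear_combination h4
  · rintro ⟨n, hn⟩
    refine ⟨n, ?_⟩
    have hc : (a : ℂ) = (b : ℂ) + (N : ℂ) * n := by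
      have h4 : a = b + (N : ℤ) * n := by linear_combination hn
      exact_mod_cast h4
    rw [hc]
    field_simp

private lemma exp_eq_one_iff_dvd (N : ℕ) (hN : N ≠ 0) (a : ℤ) :
    Complex.exp (2 * (Real.pi : ℂ) * Complex.I * a / N) = 1 ↔ (N : ℤ) ∣ a := by
  simpa using exp_eq_exp_iff_dvd N hN a 0

private lemma pow_eq_pow_iff_exp (N : ℕ) (hN : N ≠ 0) (x y : ℂ) (hx : x ≠ 0) :
    x ^ N = y ^ N ↔ ∃ a : ℤ, y = Complex.exp (2 * (Real.pi:ℂ) * Complex.I * a / N) * x := by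
  have hN' : (N:ℂ) ≠ 0 := Nat.cast_ne_zero.mpr hN
  constructor
  · intro h
    have hy : y ≠ 0 := by
      intro h0
      rw [h0, zero_pow hN] at h
      exact pow_ne_zero N hx h
    have hz0 : y / x ≠ 0 := div_ne_zero hy hx
    have hz : (y / x) ^ N = 1 := by
      rw [div_pow, ← h, div_self (pow_ne_zero N hx)]
    have hone : Complex.exp ((N:ℂ) * Complex.log (y/x)) = 1 := by
      rw [Complex.exp_nat_mul, Complex.exp_log hz0]; exact hz
    obtain ⟨a, ha⟩ := Complex.exp_eq_one_iff.mp hone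
    refine ⟨a, ?_⟩
    have hlog : Complex.log (y/x) = 2*(Real.pi:ℂ)*Complex.I*a/N := by
      rw [eq_div_iff hN']
      linear_combination ha
    have h2 := Complex.exp_log hz0
    rw [hlog] at h2
    rw [h2, div_mul_cancel₀ _ hx]
  · rintro ⟨a, rfl⟩
    rw [mul_pow, ← Complex.exp_nat_mul]
    have h3 : (N:ℂ) * (2*(Real.pi:ℂ)*Complex.I*a/N) = a * (2*(Real.pi:ℂ)*Complex.I) := by
      field_simp
    rw [h3, Complex.exp_int_mul_two_pi_mul_I, one_mul]

private lemma key_forward (M G₁ G₂ Q' R' s a b : ℤ) (hG₁ : G₁ ≠ 0) (hG₂ : G₂ ≠ 0)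
    (hcopa : IsCoprime G₂ (G₁ * Q')) (hcopb : IsCoprime G₁ (G₂ * R'))
    (hs : M * G₁ ∣ 1 - R' * s)
    (h : M * G₁ * G₂ ∣ (G₁ * Q') * a + (G₂ * R') * b) :
    ∃ k : ℤ, M * G₂ ∣ a - k * G₂ ∧ M * G₁ ∣ b - k * (-Q' * s) * G₁ := by
  have hG₂a : G₂ ∣ a := by
    have h1 : G₂ ∣ (G₁ * Q') * a := by
      have h2 : G₂ ∣ (G₁ * Q') * a + (G₂ * R') * b := dvd_trans ⟨M * G₁, by ring⟩ h
      have h3 : G₂ ∣ (G₂ * R') * b := ⟨R' * b, by ring⟩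
      exact (dvd_add_left h3).mp h2
    exact hcopa.dvd_of_dvd_mul_left h1
  have hG₁b : G₁ ∣ b := by
    have h1 : G₁ ∣ (G₂ * R') * b := by
      have h2 : G₁ ∣ (G₁ * Q') * a + (G₂ * R') * b := dvd_trans ⟨M * G₂, by ring⟩ h
      have h3 : G₁ ∣ (G₁ * Q') * a := ⟨Q' * a, by ring⟩
      exact (dvd_add_right h3).mp h2
    exact hcopb.dvd_of_dvd_mul_left h1
  obtain ⟨a', rfl⟩ := hG₂a
  obtain ⟨b', rfl⟩ := hG₁b
  have hM : M ∣ Q' * a' + R' * b' := by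
    have h1 : M * (G₁ * G₂) ∣ (Q' * a' + R' * b') * (G₁ * G₂) := by
      obtain ⟨c, hc⟩ := h
      exact ⟨c, by linear_combination hc⟩
    exact (mul_dvd_mul_iff_right (mul_ne_zero hG₁ hG₂)).mp h1
  refine ⟨a', by simp [mul_comm], ?_⟩
  have hM1 : M ∣ 1 - R' * s := dvd_trans ⟨G₁, rfl⟩ hs
  have hM2 : M ∣ b' + a' * Q' * s := by
    have h1 : M ∣ s * (Q' * a' + R' * b') := Dvd.dvd.mul_left hM s
    have h2 : M ∣ b' * (1 - R' * s) := Dvd.dvd.mul_left hM1 b'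
    have h3 : b' + a' * Q' * s = s * (Q' * a' + R' * b') + b' * (1 - R' * s) := by ring
    rw [h3]; exact dvd_add h1 h2
  obtain ⟨c, hc⟩ := hM2
  exact ⟨c, by linear_combination G₁ * hc⟩

private lemma key_backward (M G₁ G₂ Q' R' s k : ℤ)
    (hs : M * G₁ ∣ 1 - R' * s) :
    M * G₁ * G₂ ∣ (G₁ * Q') * (k * G₂) + (G₂ * R') * (k * (-Q' * s) * G₁) := by
  obtain ⟨c, hc⟩ := hs
  exact ⟨k * Q' * G₁ * c, by linear_combination k * Q' * G₁ * G₂ * hc⟩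

/-- Let `p, q, r` be positive integers with `gcd(p,q,r) = 1`, set `g₁ = gcd(p,q)`,
`g₂ = gcd(p,r)`, `m = p/(g₁·g₂)`, let `s` be an integer with `(r/g₂)·s ≡ 1 (mod p/g₂)`, and
set `n = −(q/g₁)·s`.  Then for all nonzero complex numbers `x₁, y₁, x₂, y₂`, the equalities
`x₁^{q/g₁}·y₁^{r/g₂} = x₂^{q/g₁}·y₂^{r/g₂}`, `x₁^{p/g₁} = x₂^{p/g₁}`, `y₁^{p/g₂} = y₂^{p/g₂}`
all hold iff there is an integer `k` with `x₂ = exp(2πi·k/m)·x₁` and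
`y₂ = exp(2πi·k·n/m)·y₁`. -/
theorem fibers_of_normalization_map (p q r : ℕ) (hp : 0 < p) (hq : 0 < q) (hr : 0 < r)
    (hgcd : Nat.gcd p (Nat.gcd q r) = 1)
    (s : ℤ) (hs : ((r / Nat.gcd p r : ℕ) : ℤ) * s ≡ 1 [ZMOD ((p / Nat.gcd p r : ℕ) : ℤ)])
    (x₁ y₁ x₂ y₂ : ℂ) (hx₁ : x₁ ≠ 0) (hy₁ : y₁ ≠ 0) (hx₂ : x₂ ≠ 0) (hy₂ : y₂ ≠ 0) :
    (x₁ ^ (q / Nat.gcd p q) * y₁ ^ (r / Nat.gcd p r)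
          = x₂ ^ (q / Nat.gcd p q) * y₂ ^ (r / Nat.gcd p r) ∧
        x₁ ^ (p / Nat.gcd p q) = x₂ ^ (p / Nat.gcd p q) ∧
        y₁ ^ (p / Nat.gcd p r) = y₂ ^ (p / Nat.gcd p r))
      ↔ ∃ k : ℤ,
          x₂ = Complex.exp (2 * (Real.pi : ℂ) * Complex.I * (k : ℂ)
                  / ((p / (Nat.gcd p q * Nat.gcd p r) : ℕ) : ℂ)) * x₁ ∧
          y₂ = Complex.exp (2 * (Real.pi : ℂ) * Complex.I
                  * ((k * (-((q / Nat.gcd p q : ℕ) : ℤ) * s) : ℤ) : ℂ)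
                  / ((p / (Nat.gcd p q * Nat.gcd p r) : ℕ) : ℂ)) * y₁ := by
  set g₁ := Nat.gcd p q with hg1def
  set g₂ := Nat.gcd p r with hg2def
  set q' := q / g₁ with hq'def
  set r' := r / g₂ with hr'def
  set p₁ := p / g₁ with hp₁def
  set p₂ := p / g₂ with hp₂def
  set m := p / (g₁ * g₂) with hmdef
  -- basic divisibility facts
  have hg₁p : g₁ ∣ p := Nat.gcd_dvd_left p q
  have hg₁q : g₁ ∣ q := Nat.gcd_dvd_right p q
  have hg₂p : g₂ ∣ p := Nat.gcd_dvd_left p r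
  have hg₂r : g₂ ∣ r := Nat.gcd_dvd_right p r
  have hg₁0 : g₁ ≠ 0 := fun h => by simp [hg1def, Nat.gcd_eq_zero_iff] at h; omega
  have hg₂0 : g₂ ≠ 0 := fun h => by simp [hg2def, Nat.gcd_eq_zero_iff] at h; omega
  have cop12 : Nat.Coprime g₁ g₂ := by
    have hd : Nat.gcd g₁ g₂ ∣ Nat.gcd p (Nat.gcd q r) :=
      Nat.dvd_gcd ((Nat.gcd_dvd_left g₁ g₂).trans hg₁p)
        (Nat.dvd_gcd ((Nat.gcd_dvd_left g₁ g₂).trans hg₁q)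
          ((Nat.gcd_dvd_right g₁ g₂).trans hg₂r))
    rw [hgcd] at hd
    exact Nat.dvd_one.mp hd
  have hg₁g₂p : g₁ * g₂ ∣ p := cop12.mul_dvd_of_dvd_of_dvd hg₁p hg₂p
  have e1 : p₁ = m * g₂ := by
    have h1 : g₂ ∣ p₁ := (Nat.dvd_div_iff_mul_dvd hg₁p).mpr hg₁g₂p
    rw [hmdef, ← Nat.div_div_eq_div_mul]
    exact (Nat.div_mul_cancel h1).symm
  have e2 : p₂ = m * g₁ := by
    have h1 : g₁ ∣ p₂ := (Nat.dvd_div_iff_mul_dvd hg₂p).mpr (by rwa [mul_comm] at hg₁g₂p)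
    rw [hmdef, mul_comm g₁ g₂, ← Nat.div_div_eq_div_mul]
    exact (Nat.div_mul_cancel h1).symm
  have ep : p = m * g₁ * g₂ := by
    rw [hmdef, mul_assoc]
    exact (Nat.div_mul_cancel hg₁g₂p).symm
  have eq' : q = g₁ * q' := (Nat.mul_div_cancel' hg₁q).symm
  have er' : r = g₂ * r' := (Nat.mul_div_cancel' hg₂r).symm
  have hm0 : m ≠ 0 := by
    have := Nat.div_pos (Nat.le_of_dvd hp hg₁g₂p)
      (Nat.pos_of_ne_zero (mul_ne_zero hg₁0 hg₂0))
    omega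
  have hp₁0 : p₁ ≠ 0 := by rw [e1]; exact mul_ne_zero hm0 hg₂0
  have hp₂0 : p₂ ≠ 0 := by rw [e2]; exact mul_ne_zero hm0 hg₁0
  have hp0 : p ≠ 0 := hp.ne'
  -- coprimality facts
  have copg₂q : Nat.Coprime g₂ q := by
    have hd : Nat.gcd g₂ q ∣ Nat.gcd p (Nat.gcd q r) :=
      Nat.dvd_gcd ((Nat.gcd_dvd_left g₂ q).trans hg₂p)
        (Nat.dvd_gcd (Nat.gcd_dvd_right g₂ q) ((Nat.gcd_dvd_left g₂ q).trans hg₂r))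
    rw [hgcd] at hd
    exact Nat.dvd_one.mp hd
  have copg₁r : Nat.Coprime g₁ r := by
    have hd : Nat.gcd g₁ r ∣ Nat.gcd p (Nat.gcd q r) :=
      Nat.dvd_gcd ((Nat.gcd_dvd_left g₁ r).trans hg₁p)
        (Nat.dvd_gcd ((Nat.gcd_dvd_left g₁ r).trans hg₁q) (Nat.gcd_dvd_right g₁ r))
    rw [hgcd] at hd
    exact Nat.dvd_one.mp hd
  -- cast identities
  have cq : (q : ℤ) = (g₁ : ℤ) * (q' : ℤ) := by exact_mod_cast congrArg (Nat.cast : ℕ → ℤ) eq'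
  have cr : (r : ℤ) = (g₂ : ℤ) * (r' : ℤ) := by exact_mod_cast congrArg (Nat.cast : ℕ → ℤ) er'
  have cp : (p : ℤ) = (m : ℤ) * (g₁ : ℤ) * (g₂ : ℤ) := by exact_mod_cast congrArg (Nat.cast : ℕ → ℤ) ep
  have cp₁ : (p₁ : ℤ) = (m : ℤ) * (g₂ : ℤ) := by exact_mod_cast congrArg (Nat.cast : ℕ → ℤ) e1
  have cp₂ : (p₂ : ℤ) = (m : ℤ) * (g₁ : ℤ) := by exact_mod_cast congrArg (Nat.cast : ℕ → ℤ) e2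
  have hcopa : IsCoprime ((g₂ : ℤ)) ((g₁ : ℤ) * (q' : ℤ)) := by
    rw [← cq]; exact Nat.isCoprime_iff_coprime.mpr copg₂q
  have hcopb : IsCoprime ((g₁ : ℤ)) ((g₂ : ℤ) * (r' : ℤ)) := by
    rw [← cr]; exact Nat.isCoprime_iff_coprime.mpr copg₁r
  have hsdvd : (m : ℤ) * (g₁ : ℤ) ∣ 1 - (r' : ℤ) * s := by
    rw [← cp₂]; exact hs.dvd
  -- exponent conversion: k/m = (k*g₂)/p₁ and n/m = (n*g₁)/p₂
  have hee₁ : ∀ k : ℤ, 2 * (Real.pi : ℂ) * Complex.I * (k : ℂ) / (m : ℂ)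
      = 2 * (Real.pi : ℂ) * Complex.I * ((k * (g₂ : ℤ) : ℤ) : ℂ) / (p₁ : ℂ) := by
    intro k
    have hc : (p₁ : ℂ) = (m : ℂ) * (g₂ : ℂ) := by exact_mod_cast congrArg (Nat.cast : ℕ → ℂ) e1
    have hm0' : (m : ℂ) ≠ 0 := Nat.cast_ne_zero.mpr hm0
    have hg₂0' : (g₂ : ℂ) ≠ 0 := Nat.cast_ne_zero.mpr hg₂0
    rw [hc]
    push_cast
    field_simp
  have hee₂ : ∀ k : ℤ, 2 * (Real.pi : ℂ) * Complex.I * (k : ℂ) / (m : ℂ)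
      = 2 * (Real.pi : ℂ) * Complex.I * ((k * (g₁ : ℤ) : ℤ) : ℂ) / (p₂ : ℂ) := by
    intro k
    have hc : (p₂ : ℂ) = (m : ℂ) * (g₁ : ℂ) := by exact_mod_cast congrArg (Nat.cast : ℕ → ℂ) e2
    have hm0' : (m : ℂ) ≠ 0 := Nat.cast_ne_zero.mpr hm0
    have hg₁0' : (g₁ : ℂ) ≠ 0 := Nat.cast_ne_zero.mpr hg₁0
    rw [hc]
    push_cast
    field_simp
  -- product computation
  have hprod : ∀ a b : ℤ, x₂ = Complex.exp (2 * (Real.pi:ℂ) * Complex.I * a / (p₁:ℂ)) * x₁ →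
      y₂ = Complex.exp (2 * (Real.pi:ℂ) * Complex.I * b / (p₂:ℂ)) * y₁ →
      x₂ ^ q' * y₂ ^ r'
        = Complex.exp (2 * (Real.pi:ℂ) * Complex.I * (((q:ℤ) * a + (r:ℤ) * b : ℤ) : ℂ) / (p:ℂ))
            * (x₁ ^ q' * y₁ ^ r') := by
    intro a b ha hb
    rw [ha, hb, mul_pow, mul_pow, ← Complex.exp_nat_mul, ← Complex.exp_nat_mul]
    have c1 : (q' : ℂ) * (p : ℂ) = (q : ℂ) * (p₁ : ℂ) := by
      have : q' * p = q * p₁ := by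
        calc q' * p = q' * (g₁ * p₁) := by rw [Nat.mul_div_cancel' hg₁p]
        _ = (g₁ * q') * p₁ := by ring
        _ = q * p₁ := by rw [← eq']
      exact_mod_cast congrArg (Nat.cast : ℕ → ℂ) this
    have c2 : (r' : ℂ) * (p : ℂ) = (r : ℂ) * (p₂ : ℂ) := by
      have : r' * p = r * p₂ := by
        calc r' * p = r' * (g₂ * p₂) := by rw [Nat.mul_div_cancel' hg₂p]
        _ = (g₂ * r') * p₂ := by ring
        _ = r * p₂ := by rw [← er']
      exact_mod_cast congrArg (Nat.cast : ℕ → ℂ) this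
    have hp₁0' : (p₁ : ℂ) ≠ 0 := Nat.cast_ne_zero.mpr hp₁0
    have hp₂0' : (p₂ : ℂ) ≠ 0 := Nat.cast_ne_zero.mpr hp₂0
    have hp0' : (p : ℂ) ≠ 0 := Nat.cast_ne_zero.mpr hp0
    have hexp : Complex.exp ((q' : ℂ) * (2 * (Real.pi:ℂ) * Complex.I * a / (p₁:ℂ)))
        * Complex.exp ((r' : ℂ) * (2 * (Real.pi:ℂ) * Complex.I * b / (p₂:ℂ)))
        = Complex.exp (2 * (Real.pi:ℂ) * Complex.I * (((q:ℤ) * a + (r:ℤ) * b : ℤ) : ℂ) / (p:ℂ)) := by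
      rw [← Complex.exp_add]
      congr 1
      push_cast
      field_simp
      linear_combination (a * (p₂:ℂ)) * c1
        + (b * (p₁:ℂ)) * c2
    linear_combination (x₁ ^ q' * y₁ ^ r') * hexp
  have hA : x₁ ^ q' * y₁ ^ r' ≠ 0 := mul_ne_zero (pow_ne_zero _ hx₁) (pow_ne_zero _ hy₁)
  have hg₁0' : (g₁ : ℤ) ≠ 0 := Int.natCast_ne_zero.mpr hg₁0
  have hg₂0' : (g₂ : ℤ) ≠ 0 := Int.natCast_ne_zero.mpr hg₂0
  constructor
  · rintro ⟨h1, h2, h3⟩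
    obtain ⟨a, ha⟩ := (pow_eq_pow_iff_exp p₁ hp₁0 x₁ x₂ hx₁).mp h2
    obtain ⟨b, hb⟩ := (pow_eq_pow_iff_exp p₂ hp₂0 y₁ y₂ hy₁).mp h3
    rw [hprod a b ha hb] at h1
    have hone : Complex.exp
        (2 * (Real.pi:ℂ) * Complex.I * (((q:ℤ) * a + (r:ℤ) * b : ℤ) : ℂ) / (p:ℂ)) = 1 := by
      have h1' : Complex.exp
          (2 * (Real.pi:ℂ) * Complex.I * (((q:ℤ) * a + (r:ℤ) * b : ℤ) : ℂ) / (p:ℂ))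
          * (x₁ ^ q' * y₁ ^ r') = 1 * (x₁ ^ q' * y₁ ^ r') := by rw [one_mul, ← h1]
      exact mul_right_cancel₀ hA h1'
    have hdvd : (p : ℤ) ∣ (q : ℤ) * a + (r : ℤ) * b := (exp_eq_one_iff_dvd p hp0 _).mp hone
    rw [cp, cq, cr] at hdvd
    obtain ⟨k, hk1, hk2⟩ := key_forward (m:ℤ) (g₁:ℤ) (g₂:ℤ) (q':ℤ) (r':ℤ) s a b
      hg₁0' hg₂0' hcopa hcopb hsdvd hdvd
    refine ⟨k, ?_, ?_⟩
    · rw [ha, hee₁ k]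
      congr 1
      rw [exp_eq_exp_iff_dvd p₁ hp₁0, cp₁]
      exact hk1
    · rw [hb, hee₂ (k * (-((q' : ℕ) : ℤ) * s))]
      congr 1
      rw [exp_eq_exp_iff_dvd p₂ hp₂0, cp₂]
      exact hk2
  · rintro ⟨k, hkx, hky⟩
    have ha : x₂ = Complex.exp
        (2 * (Real.pi:ℂ) * Complex.I * ((k * (g₂ : ℤ) : ℤ) : ℂ) / (p₁:ℂ)) * x₁ := by
      rw [hkx, hee₁ k]
    have hb : y₂ = Complex.exp
        (2 * (Real.pi:ℂ) * Complex.I * ((k * (-((q':ℕ):ℤ) * s) * (g₁ : ℤ) : ℤ) : ℂ) / (p₂:ℂ)) * y₁ := by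
      rw [hky, hee₂ (k * (-((q':ℕ):ℤ) * s))]
    refine ⟨?_, ?_, ?_⟩
    · rw [hprod _ _ ha hb]
      have hdvd : (p : ℤ) ∣ (q : ℤ) * (k * (g₂:ℤ)) + (r : ℤ) * (k * (-((q':ℕ):ℤ) * s) * (g₁:ℤ)) := by
        rw [cp, cq, cr]
        exact key_backward (m:ℤ) (g₁:ℤ) (g₂:ℤ) (q':ℤ) (r':ℤ) s k hsdvd
      rw [(exp_eq_one_iff_dvd p hp0 _).mpr hdvd, one_mul]
    · exact (pow_eq_pow_iff_exp p₁ hp₁0 x₁ x₂ hx₁).mpr ⟨_, ha⟩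
    · exact (pow_eq_pow_iff_exp p₂ hp₂0 y₁ y₂ hy₁).mpr ⟨_, hb⟩
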